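/- Let R be a commutative noetherian ring, let S_Artin denote the class of Artinian R-modules, and let S be any Serre class of R-modules. Then the extension class (S, S_Artin), i.e., the class of R-modules M admitting a submodule N ∈ S such that M/N is Artinian, is a Serre class; in particular it is closed under extensions. -/

import Mathlib

universe u v

/-- The extension class `(S₁, S₂)`: modules `M` admitting a submodule `N ∈ S₁` with `M/N ∈ S₂`. -/
def ExtensionClass {R : Type u} [CommRing R]
    (S₁ S₂ : ∀ (M : Type v) [AddCommGroup M] [Module R M], Prop)
    (M : Type v) [AddCommGroup M] [Module R M] : Prop :=
  ∃ N : Submodule R M, S₁ N ∧ S₂ (M ⧸ N)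

/-- A Serre class of `R`-modules. -/
structure IsSerreClass (R : Type u) [CommRing R]
    (S : ∀ (M : Type v) [AddCommGroup M] [Module R M], Prop) : Prop where
  isoClosed : ∀ (M N : Type v) [AddCommGroup M] [Module R M] [AddCommGroup N] [Module R N],
      (M ≃ₗ[R] N) → S M → S N
  zeroMem : ∀ (M : Type v) [AddCommGroup M] [Module R M], Subsingleton M → S M
  subClosed : ∀ (M : Type v) [AddCommGroup M] [Module R M] (N : Submodule R M), S M → S N
  quotClosed : ∀ (M : Type v) [AddCommGroup M] [Module R M] (N : Submodule R M), S M → S (M ⧸ N)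
  extClosed : ∀ (L M N : Type v) [AddCommGroup L] [Module R L] [AddCommGroup M] [Module R M]
      [AddCommGroup N] [Module R N] (f : L →ₗ[R] M) (g : M →ₗ[R] N),
      Function.Injective f → Function.Surjective g →
      LinearMap.range f = LinearMap.ker g → S L → S N → S M

section Aux
variable {R : Type u} [CommRing R]
variable {W : Type v} [AddCommGroup W] [Module R W]

lemma exists_min_le (K : Submodule R W) [IsArtinian R ↥K] (Sset : Set (Submodule R W))
    (hle : ∀ N ∈ Sset, N ≤ K) (hne : Sset.Nonempty) :
    ∃ N ∈ Sset, ∀ N' ∈ Sset, N' ≤ N → N' = N := by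
  obtain ⟨P, hP, hmin⟩ := IsArtinian.set_has_minimal
    ((fun N => Submodule.comap K.subtype N) '' Sset) (hne.image _)
  obtain ⟨N₀, hN₀, rfl⟩ := hP
  refine ⟨N₀, hN₀, fun N' hN' hle' => ?_⟩
  have h1 : Submodule.map K.subtype (Submodule.comap K.subtype N') = N' := by
    rw [Submodule.map_comap_subtype, inf_eq_right.2 (hle _ hN')]
  have h2 : Submodule.map K.subtype (Submodule.comap K.subtype N₀) = N₀ := by
    rw [Submodule.map_comap_subtype, inf_eq_right.2 (hle _ hN₀)]
  have hc : Submodule.comap K.subtype N' ≤ Submodule.comap K.subtype N₀ :=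
    Submodule.comap_mono hle'
  have heq : Submodule.comap K.subtype N' = Submodule.comap K.subtype N₀ :=
    eq_of_le_of_not_lt hc (hmin _ ⟨N', hN', rfl⟩)
  rw [← h1, heq, h2]

/-- If `N ⊓ ker φ` and `φ(N)` are Artinian, so is `N`. -/
lemma artinian_of_inf_ker_map (φ : W →ₗ[R] W) (N : Submodule R W)
    (h1 : IsArtinian R ↥(N ⊓ LinearMap.ker φ : Submodule R W))
    (h2 : IsArtinian R ↥(N.map φ)) : IsArtinian R ↥N := by
  haveI := h1; haveI := h2
  refine isArtinian_of_range_eq_ker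
    (Submodule.inclusion (inf_le_left : N ⊓ LinearMap.ker φ ≤ N))
    (φ.restrict (fun w hw => Submodule.mem_map_of_mem hw)) ?_
  ext ⟨w, hw⟩
  constructor
  · rintro ⟨⟨v, hv⟩, hvw⟩
    have hvw' : v = w := congrArg Subtype.val hvw
    subst hvw'
    have : φ v = 0 := hv.2
    rw [LinearMap.mem_ker]
    ext
    simpa [LinearMap.restrict_apply] using this
  · intro hker
    have hφw : φ w = 0 := by
      have := congrArg Subtype.val hker
      simpa [LinearMap.restrict_apply] using this
    refine ⟨⟨w, ⟨hw, hφw⟩⟩, rfl⟩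

/-- If every proper submodule of `N` is Artinian, then `N` is Artinian. -/
lemma artinian_of_lt_artinian (N : Submodule R W)
    (h : ∀ P : Submodule R W, P < N → IsArtinian R ↥P) : IsArtinian R ↥N := by
  rw [← monotone_stabilizes_iff_artinian]
  intro f
  set F : ℕ → Submodule R ↥N := fun m => OrderDual.ofDual (f m) with hF
  have hFmono : ∀ {m m' : ℕ}, m ≤ m' → F m' ≤ F m := fun {m m'} h => f.monotone h
  by_cases hconst : ∀ m, F m = F 0
  · exact ⟨0, fun m _ => congrArg OrderDual.toDual ((hconst m).symm)⟩
  · push_neg at hconst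
    obtain ⟨j, hj⟩ := hconst
    have hj0 : F j ≤ F 0 := hFmono (Nat.zero_le j)
    have hjt : F j ≠ ⊤ := fun htop => hj (le_antisymm hj0 (htop ▸ le_top))
    have hP : Submodule.map N.subtype (F j) < N := by
      refine lt_of_le_of_ne (Submodule.map_subtype_le N (F j)) ?_
      intro he
      apply hjt
      apply Submodule.map_injective_of_injective (N.injective_subtype)
      rw [Submodule.map_subtype_top]
      exact he
    haveI := h _ hP
    haveI : IsArtinian R ↥(F j) :=
      isArtinian_of_linearEquiv
        (Submodule.equivMapOfInjective N.subtype N.injective_subtype (F j)).symm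
    set g : ℕ →o (Submodule R ↥(F j))ᵒᵈ :=
      ⟨fun m => OrderDual.toDual (Submodule.comap (F j).subtype (F (j + m))),
       fun m m' hmm => Submodule.comap_mono (hFmono (by omega))⟩ with hg
    obtain ⟨n, hn⟩ := IsArtinian.monotone_stabilizes g
    have hrec : ∀ i, F (j + i) = Submodule.map (F j).subtype (OrderDual.ofDual (g i)) := by
      intro i
      have hle : F (j + i) ≤ F j := hFmono (by omega)
      show F (j + i) = Submodule.map (F j).subtype (Submodule.comap (F j).subtype (F (j + i)))
      rw [Submodule.map_comap_subtype, inf_eq_right.2 hle]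
    refine ⟨j + n, fun m hm => ?_⟩
    have h1 : F m = F (j + (m - j)) := by congr 1; omega
    have h2 := hn (m - j) (by omega)
    show OrderDual.toDual (F (j+n)) = OrderDual.toDual (F m)
    rw [h1, hrec, hrec, h2]

/-- Melkersson's criterion, principal case: if `W` is `x`-power-torsion and the `x`-torsion
submodule is Artinian, then `W` is Artinian. -/
lemma lemmaP (x : R) (htor : ∀ w : W, ∃ n : ℕ, x ^ n • w = 0)
    (hK : IsArtinian R ↥(Submodule.torsionBy R W x)) : IsArtinian R W := by
  by_contra hW
  set K := Submodule.torsionBy R W x with hKdef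
  set μ : Module.End R W := x • (LinearMap.id : W →ₗ[R] W) with hμ
  have hμapp : ∀ w : W, μ w = x • w := fun w => rfl
  have hpow : ∀ (n : ℕ) (w : W), (μ ^ n) w = x ^ n • w := by
    intro n
    induction n with
    | zero => intro w; simp [pow_zero, one_smul, Module.End.one_apply]
    | succ n ih =>
      intro w
      rw [pow_succ, Module.End.mul_apply, hμapp, ih, pow_succ, mul_smul]
  have hker : LinearMap.ker μ = K := by
    ext w
    simp [LinearMap.mem_ker, hμapp, hKdef, Submodule.mem_torsionBy_iff]
  have hmaple : ∀ N : Submodule R W, N.map μ ≤ N := by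
    rintro N w ⟨v, hv, rfl⟩
    rw [hμapp]
    exact N.smul_mem x hv
  have hmap0 : ∀ N : Submodule R W, N.map (μ ^ 0) = N := by
    intro N
    rw [pow_zero]
    exact Submodule.map_id N
  -- all bounded-torsion submodules are Artinian
  have hKn : ∀ n : ℕ, IsArtinian R ↥(Submodule.torsionBy R W (x ^ n)) := by
    intro n
    induction n with
    | zero =>
      have : Submodule.torsionBy R W (x ^ 0) = ⊥ := by
        ext w; simp [Submodule.mem_torsionBy_iff]
      rw [this]; infer_instance
    | succ n ih =>
      refine artinian_of_inf_ker_map μ _ ?_ ?_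
      · rw [hker]
        exact isArtinian_of_le inf_le_right
      · haveI := ih
        refine isArtinian_of_le (t := Submodule.torsionBy R W (x ^ n)) ?_
        rintro w ⟨v, hv, rfl⟩
        have hv' : x ^ (n + 1) • v = 0 := hv
        rw [Submodule.mem_torsionBy_iff, hμapp, smul_smul, ← pow_succ]
        exact hv'
  have htop : ¬ IsArtinian R ↥(⊤ : Submodule R W) := fun h =>
    hW (isArtinian_of_linearEquiv (Submodule.topEquiv (R := R) (M := W)))
  -- minimal socle of a non-Artinian submodule
  obtain ⟨K', hK'mem, hminK'⟩ := exists_min_le K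
    {P | ∃ N : Submodule R W, ¬ IsArtinian R ↥N ∧ P = N ⊓ K}
    (by rintro P ⟨N, _, rfl⟩; exact inf_le_right)
    ⟨⊤ ⊓ K, ⊤, htop, rfl⟩
  obtain ⟨W', hW'na, hK'⟩ := hK'mem
  have fact2 : ∀ N : Submodule R W, ¬ IsArtinian R ↥N → N ≤ W' → N ⊓ K = K' := by
    intro N hna hle
    refine hminK' (N ⊓ K) ⟨N, hna, rfl⟩ ?_
    rw [hK']
    exact inf_le_inf_right K hle
  have fact1 : ∀ N : Submodule R W, ¬ IsArtinian R ↥N → ¬ IsArtinian R ↥(N.map μ) := by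
    intro N hna hArt
    refine hna (artinian_of_inf_ker_map μ N ?_ hArt)
    rw [hker]
    exact isArtinian_of_le inf_le_right
  have fact4 : ∀ N : Submodule R W, ¬ IsArtinian R ↥N → N ≤ W' → ∀ n : ℕ,
      (¬ IsArtinian R ↥(N.map (μ ^ n)) ∧ N.map (μ ^ n) ≤ N ∧ K' ≤ N.map (μ ^ n)) := by
    intro N hna hle n
    induction n with
    | zero =>
      rw [hmap0]
      exact ⟨hna, le_rfl, by rw [← fact2 N hna hle]; exact inf_le_left⟩
    | succ n ih =>
      obtain ⟨ihna, ihle, ihK⟩ := ih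
      have hcomp : N.map (μ ^ (n + 1)) = (N.map (μ ^ n)).map μ := by
        rw [pow_succ']
        rw [Module.End.mul_eq_comp, Submodule.map_comp]
      rw [hcomp]
      have hle' : (N.map (μ ^ n)).map μ ≤ N := le_trans (hmaple _) ihle
      have hna' : ¬ IsArtinian R ↥((N.map (μ ^ n)).map μ) := fact1 _ ihna
      refine ⟨hna', hle', ?_⟩
      rw [← fact2 _ hna' (le_trans hle' hle)]
      exact inf_le_left
  -- the set C and a Zorn-minimal element
  set C : Set (Submodule R W) := {N | N ≤ W' ∧ ∀ n : ℕ, K' ≤ N.map (μ ^ n)} with hC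
  have hW'C : W' ∈ C := ⟨le_rfl, fun n => (fact4 W' hW'na le_rfl n).2.2⟩
  obtain ⟨N₀, hN₀C, hN₀min⟩ : ∃ N ∈ C, ∀ N' ∈ C, N' ≤ N → N' = N := by
    have hzorn := zorn_le₀ (α := (Submodule R W)ᵒᵈ)
      {N : (Submodule R W)ᵒᵈ | OrderDual.ofDual N ∈ C} ?_
    · obtain ⟨m, hm⟩ := hzorn
      refine ⟨OrderDual.ofDual m, hm.1, fun N' hN' hle => ?_⟩
      exact le_antisymm hle (hm.2 (y := OrderDual.toDual N') hN' hle)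
    · intro c hsub hchain
      rcases c.eq_empty_or_nonempty with rfl | ⟨N₁, hN₁⟩
      · exact ⟨OrderDual.toDual W', hW'C, fun z hz => absurd hz (Set.notMem_empty z)⟩
      · refine ⟨OrderDual.toDual (sInf (OrderDual.ofDual '' c)), ⟨?_, ?_⟩, ?_⟩
        · exact le_trans (sInf_le ⟨N₁, hN₁, rfl⟩) (hsub hN₁).1
        · intro n w hw
          haveI := hKn n
          obtain ⟨P₀, hP₀mem, hP₀min⟩ := exists_min_le (Submodule.torsionBy R W (x ^ n))
            ((fun N => N ⊓ Submodule.torsionBy R W (x ^ n)) '' (OrderDual.ofDual '' c))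
            (by rintro P ⟨N, _, rfl⟩; exact inf_le_right)
            ⟨_, ⟨OrderDual.ofDual N₁, ⟨N₁, hN₁, rfl⟩, rfl⟩⟩
          obtain ⟨Nm, hNmcs, rfl⟩ := hP₀mem
          obtain ⟨Nd, hNdc, rfl⟩ := hNmcs
          obtain ⟨v₀, hv₀, hv₀w⟩ := (hsub hNdc).2 n hw
          have hv₀mem : ∀ Nd' ∈ c, v₀ ∈ OrderDual.ofDual Nd' := by
            intro Nd' hNd'c
            rcases eq_or_ne Nd' Nd with rfl | hne
            · exact hv₀
            rcases hchain hNd'c hNdc hne with hle | hle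
            · -- Nd' ≤ Nd in dual, i.e. Nd ≤ Nd' as submodules
              exact (hle : (OrderDual.ofDual Nd : Submodule R W) ≤ OrderDual.ofDual Nd') hv₀
            · -- Nd ≤ Nd' in dual, i.e. Nd' ≤ Nd as submodules
              have hle' : (OrderDual.ofDual Nd' : Submodule R W) ≤ OrderDual.ofDual Nd := hle
              obtain ⟨v, hv, hvw⟩ := (hsub hNd'c).2 n hw
              have hv₀' : v₀ ∈ (OrderDual.ofDual Nd : Submodule R W) := hv₀
              have hv' : v ∈ (OrderDual.ofDual Nd' : Submodule R W) := hv
              have hsubKn : v₀ - v ∈ OrderDual.ofDual Nd ⊓ Submodule.torsionBy R W (x ^ n) :=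
                ⟨sub_mem hv₀' (hle' hv'),
                 (Submodule.mem_torsionBy_iff _ _).mpr
                   (by rw [smul_sub, ← hpow, ← hpow, hv₀w, hvw, sub_self])⟩
              have heqinf : OrderDual.ofDual Nd' ⊓ Submodule.torsionBy R W (x ^ n)
                  = OrderDual.ofDual Nd ⊓ Submodule.torsionBy R W (x ^ n) := by
                refine hP₀min _ ⟨OrderDual.ofDual Nd', ⟨Nd', hNd'c, rfl⟩, rfl⟩ ?_
                exact inf_le_inf_right _ hle'
              rw [← heqinf] at hsubKn
              have : v₀ - v + v ∈ OrderDual.ofDual Nd' := add_mem hsubKn.1 hv'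
              simpa using this
          refine Submodule.mem_map.mpr ⟨v₀, ?_, hv₀w⟩
          show v₀ ∈ sInf (OrderDual.ofDual '' c)
          refine Submodule.mem_sInf.mpr ?_
          rintro p ⟨Nd', hNd'c, rfl⟩
          exact hv₀mem Nd' hNd'c
        · intro z hz
          show sInf (OrderDual.ofDual '' c) ≤ OrderDual.ofDual z
          exact sInf_le ⟨z, hz, rfl⟩
  -- N₀ is x-divisible
  have hdiv : N₀.map μ = N₀ := by
    refine hN₀min (N₀.map μ) ⟨le_trans (hmaple _) hN₀C.1, fun n => ?_⟩ (hmaple _)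
    have : (N₀.map μ).map (μ ^ n) = N₀.map (μ ^ (n + 1)) := by
      rw [pow_succ, Module.End.mul_eq_comp, Submodule.map_comp]
    rw [this]
    exact hN₀C.2 (n + 1)
  -- N₀ is Artinian
  have hN₀art : IsArtinian R ↥N₀ := by
    by_contra hna
    refine hna (artinian_of_lt_artinian N₀ ?_)
    intro P hP
    by_contra hPna
    have hPC : P ∈ C := ⟨le_trans hP.le hN₀C.1, fun n => (fact4 P hPna (le_trans hP.le hN₀C.1) n).2.2⟩
    exact hP.ne (hN₀min P hPC hP.le)
  have hK'N₀ : K' ≤ N₀ := by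
    have := hN₀C.2 0
    rwa [hmap0] at this
  -- the descent step
  have hstep : ∀ v : W, v ∈ W' → μ v ∈ N₀ → v ∈ N₀ := by
    intro v hvW' hμv
    rw [← hdiv] at hμv
    obtain ⟨u, hu, huv⟩ := hμv
    have hu' : u ∈ N₀ := hu
    have husub : v - u ∈ W' ⊓ K :=
      ⟨sub_mem hvW' (hN₀C.1 hu'),
       (Submodule.mem_torsionBy_iff _ _).mpr
         (by rw [smul_sub, ← hμapp, ← hμapp, huv, sub_self])⟩
    rw [fact2 W' hW'na le_rfl] at husub
    have : u + (v - u) ∈ N₀ := add_mem hu (hK'N₀ husub)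
    simpa using this
  have hsteps : ∀ (n : ℕ) (v : W), v ∈ W' → x ^ n • v = 0 → v ∈ N₀ := by
    intro n
    induction n with
    | zero =>
      intro v hv h0
      rw [pow_zero, one_smul] at h0
      rw [h0]
      exact N₀.zero_mem
    | succ n ih =>
      intro v hv h0
      refine hstep v hv (ih (μ v) (W'.smul_mem x hv) ?_)
      rw [hμapp, smul_smul, ← pow_succ]
      exact h0
  have hfin : W' ≤ N₀ := fun v hv => by
    obtain ⟨n, hn⟩ := htor v
    exact hsteps n v hv hn
  have : W' = N₀ := le_antisymm hfin hN₀C.1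
  rw [this] at hW'na
  exact hW'na hN₀art

/-- Melkersson's criterion for a finitely generated ideal, phrased via a list of generators. -/
lemma lemmaM (l : List R) :
    ∀ (W : Type v) (_inst1 : AddCommGroup W) (_inst2 : Module R W),
      (∀ x ∈ l, ∀ w : W, ∃ n : ℕ, x ^ n • w = 0) →
      IsArtinian R ↥(Submodule.torsionBySet R W {y : R | y ∈ l}) → IsArtinian R W := by
  induction l with
  | nil =>
    intro W _ _ _ hart
    have htopeq : Submodule.torsionBySet R W {y : R | y ∈ ([] : List R)} = ⊤ := by
      refine eq_top_iff.mpr fun w _ => ?_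
      refine (Submodule.mem_torsionBySet_iff _ _).mpr ?_
      rintro ⟨a, ha⟩
      exact absurd ha (by simp)
    rw [htopeq] at hart
    exact isArtinian_of_linearEquiv (Submodule.topEquiv (R := R) (M := W))
  | cons x l ih =>
    intro W _ _ htor hart
    set V := Submodule.torsionBy R W x with hV
    have hTleV : Submodule.torsionBySet R W {y : R | y ∈ x :: l} ≤ V := by
      intro w hw
      have := (Submodule.mem_torsionBySet_iff _ _).mp hw ⟨x, by simp⟩
      exact (Submodule.mem_torsionBy_iff _ _).mpr this
    have hVart : IsArtinian R ↥V := by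
      refine ih ↥V inferInstance inferInstance ?_ ?_
      · intro y hy v
        obtain ⟨n, hn⟩ := htor y (List.mem_cons_of_mem x hy) (v : W)
        exact ⟨n, Subtype.ext (by simpa using hn)⟩
      · have hcomap : Submodule.torsionBySet R ↥V {y : R | y ∈ l}
            = Submodule.comap V.subtype (Submodule.torsionBySet R W {y : R | y ∈ x :: l}) := by
          ext v
          simp only [Submodule.mem_torsionBySet_iff, Submodule.mem_comap]
          constructor
          · intro h
            rintro ⟨a, ha⟩
            rcases (by simpa using ha : a = x ∨ a ∈ l) with rfl | hal
            · exact (Submodule.mem_torsionBy_iff _ _).mp v.2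
            · have := h ⟨a, hal⟩
              have := congrArg Subtype.val this
              simpa using this
          · intro h
            rintro ⟨a, ha⟩
            refine Subtype.ext ?_
            have := h ⟨a, by simp only [Set.mem_setOf_eq, List.mem_cons]; exact Or.inr ha⟩
            simpa using this
        rw [hcomap]
        exact isArtinian_of_linearEquiv (Submodule.comapSubtypeEquivOfLe hTleV).symm
    exact lemmaP x (fun w => htor x (List.mem_cons_self (a := x) (l := l)) w) hVart

/-- Over a noetherian ring, if `T` is an essential submodule of `W` killed by `x`,
then every element of `W` is killed by a power of `x`. -/
lemma lemmaE [IsNoetherianRing R] (T : Submodule R W)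
    (hess : ∀ V : Submodule R W, V ≠ ⊥ → V ⊓ T ≠ ⊥)
    (x : R) (hxT : ∀ t ∈ T, x • t = 0) (w : W) : ∃ n : ℕ, x ^ n • w = 0 := by
  set F := Submodule.span R {w} with hF
  haveI : IsNoetherian R ↥F :=
    isNoetherian_of_fg_of_noetherian F (Submodule.fg_span_singleton w)
  set g : ℕ →o Submodule R ↥F :=
    ⟨fun j => Submodule.comap F.subtype (Submodule.torsionBy R W (x ^ j)),
     fun j j' hj => Submodule.comap_mono
       (Submodule.torsionBy_le_torsionBy_of_dvd _ _ (pow_dvd_pow x hj))⟩ with hg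
  obtain ⟨k, hk⟩ := monotone_stabilizes_iff_noetherian.mpr (inferInstance : IsNoetherian R ↥F) g
  by_cases hwk : x ^ k • w = 0
  · exact ⟨k, hwk⟩
  exfalso
  have hgktop : g k ≠ ⊤ := by
    intro htop
    refine hwk ?_
    have : (⟨w, Submodule.mem_span_singleton_self w⟩ : ↥F) ∈ g k := htop ▸ Submodule.mem_top
    exact this
  haveI : Nontrivial (↥F ⧸ g k) :=
    Submodule.Quotient.nontrivial_iff.mpr (lt_top_iff_ne_top.mpr hgktop).ne
  obtain ⟨p, hp⟩ := associatedPrimes.nonempty R (↥F ⧸ g k)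
  obtain ⟨hprime, vbar, hann⟩ := isAssociatedPrime_iff.mp hp
  obtain ⟨v, rfl⟩ := Submodule.Quotient.mk_surjective (g k) vbar
  have hmemp : ∀ r : R, r ∈ p ↔ r • Submodule.Quotient.mk (p := g k) v = 0 := by
    intro r
    rw [hann, Submodule.mem_colon_singleton, Submodule.mem_bot]
  have hvbar : Submodule.Quotient.mk (p := g k) v ≠ 0 := by
    intro h0
    refine hprime.ne_top ?_
    rw [Ideal.eq_top_iff_one, hmemp, h0, smul_zero]
  -- x ∉ p
  have hxp : x ∉ p := by
    intro hxmem
    have hxv : x • Submodule.Quotient.mk (p := g k) v = 0 := (hmemp x).mp hxmem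
    rw [← Submodule.Quotient.mk_smul, Submodule.Quotient.mk_eq_zero] at hxv
    have : x ^ k • (x • v : ↥F).val = 0 := hxv
    have hv1 : v ∈ g (k+1) := by
      show x ^ (k+1) • (v : W) = 0
      rw [pow_succ, mul_smul]
      simpa using this
    rw [← hk (k+1) (by omega)] at hv1
    exact hvbar (Submodule.Quotient.mk_eq_zero _ |>.mpr hv1)
  -- the element z = x^k • v is nonzero
  set z : W := x ^ k • (v : W) with hz
  have hzne : z ≠ 0 := by
    intro h0
    have : v ∈ g k := h0
    exact hvbar (Submodule.Quotient.mk_eq_zero _ |>.mpr this)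
  have hspanne : Submodule.span R {z} ≠ ⊥ := by
    rw [Ne, Submodule.span_singleton_eq_bot]
    exact hzne
  obtain ⟨y, hy, hyne⟩ := Submodule.exists_mem_ne_zero_of_ne_bot (hess _ hspanne)
  obtain ⟨hyz, hyT⟩ := hy
  obtain ⟨s, rfl⟩ := Submodule.mem_span_singleton.mp hyz
  have hxy : x • (s • z) = 0 := hxT _ hyT
  have hsx : (s * x ^ (k+1)) • (v : W) = 0 := by
    have hscal : s * x ^ (k+1) = x * (s * x ^ k) := by ring
    rw [hscal, mul_smul, mul_smul, ← hz]
    exact hxy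
  have hsxp : s * x ^ (k+1) ∈ p := by
    rw [hmemp, ← Submodule.Quotient.mk_smul, Submodule.Quotient.mk_eq_zero]
    show x ^ k • ((s * x ^ (k+1)) • (v : W)) = 0
    rw [hsx, smul_zero]
  have hsp : s ∈ p := by
    rcases hprime.mem_or_mem hsxp with h | h
    · exact h
    · exact absurd (hprime.mem_of_pow_mem _ h) hxp
  have hsv : s • v ∈ g k := by
    have := (hmemp s).mp hsp
    rw [← Submodule.Quotient.mk_smul, Submodule.Quotient.mk_eq_zero] at this
    exact this
  have : x ^ k • (s • (v : W)) = 0 := hsv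
  refine hyne ?_
  rw [hz, smul_comm]
  exact this

/-- Over a noetherian ring, an essential extension of an Artinian module is Artinian. -/
lemma artinian_of_essential_artinian [IsNoetherianRing R] (Y : Submodule R W)
    (hYart : IsArtinian R ↥Y)
    (hess : ∀ V : Submodule R W, V ≠ ⊥ → V ⊓ Y ≠ ⊥) : IsArtinian R W := by
  classical
  haveI := hYart
  by_cases hYbot : Y = ⊥
  · haveI : Subsingleton W := by
      refine subsingleton_of_forall_eq 0 fun w => ?_
      by_contra hw
      have hsp : Submodule.span R {w} ≠ ⊥ := by
        rw [Ne, Submodule.span_singleton_eq_bot]; exact hw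
      have := hess _ hsp
      rw [hYbot, inf_bot_eq] at this
      exact this rfl
    infer_instance
  set Socm : Ideal R → Submodule R W :=
    fun m => Y ⊓ Submodule.torsionBySet R W (m : Set R) with hSocm
  set A : Set (Ideal R) := {m | m.IsMaximal ∧ Socm m ≠ ⊥} with hA
  -- (b1) every nonzero submodule of Y contains a nonzero element of some Socm, m ∈ A
  have hb1 : ∀ N : Submodule R W, N ≤ Y → N ≠ ⊥ →
      ∃ m ∈ A, ∃ u : W, u ≠ 0 ∧ u ∈ N ∧ u ∈ Socm m := by
    intro N hNY hNbot
    obtain ⟨P, hPmem, hPmin⟩ := exists_min_le Y {P : Submodule R W | P ≤ N ∧ P ≠ ⊥}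
      (fun P hP => le_trans hP.1 hNY) ⟨N, le_rfl, hNbot⟩
    obtain ⟨u, huP, hune⟩ := Submodule.exists_mem_ne_zero_of_ne_bot hPmem.2
    set m : Ideal R := (R ∙ u).annihilator with hm
    have hmu : ∀ r ∈ m, r • u = 0 := fun r hr =>
      (Submodule.mem_annihilator_span_singleton _ _).mp hr
    have humem : ∀ r : R, r • u = 0 → r ∈ m := fun r hr =>
      (Submodule.mem_annihilator_span_singleton _ _).mpr hr
    have hmmax : m.IsMaximal := by
      rw [Ideal.isMaximal_iff]
      constructor
      · intro h1; exact hune (by simpa using hmu 1 h1)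
      · intro J r hmJ hrm hrJ
        have hru : r • u ≠ 0 := fun h => hrm (humem r h)
        have hsmem : r • u ∈ P := P.smul_mem r huP
        have hspan : Submodule.span R {r • u} = P := by
          refine hPmin _ ⟨le_trans (Submodule.span_le.mpr (by simpa using hsmem)) hPmem.1,
            by rw [Ne, Submodule.span_singleton_eq_bot]; exact hru⟩
            (Submodule.span_le.mpr (by simpa using hsmem))
        have humem2 : u ∈ Submodule.span R {r • u} := by rw [hspan]; exact huP
        obtain ⟨s, hs⟩ := Submodule.mem_span_singleton.mp humem2
        have h1sr : 1 - s * r ∈ m := by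
          refine humem _ ?_
          rw [sub_smul, one_smul, mul_smul, hs, sub_self]
        have : (1 : R) = (1 - s * r) + s * r := by ring
        rw [this]
        exact J.add_mem (hmJ h1sr) (J.mul_mem_left s hrJ)
    have huY : u ∈ Y := hNY (hPmem.1 huP)
    have huS : u ∈ Socm m :=
      ⟨huY, (Submodule.mem_torsionBySet_iff _ _).mpr fun a => hmu a.1 a.2⟩
    refine ⟨m, ⟨hmmax, fun hbot => ?_⟩, u, hune, hPmem.1 huP, huS⟩
    rw [hbot] at huS
    exact hune (by simpa using huS)
  -- independence of distinct socle components
  have hindep : ∀ (Q : Ideal R → Prop) (m : Ideal R), m.IsMaximal → ¬ Q m →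
      (∀ m', Q m' → Ideal.IsMaximal m') →
      Socm m ⊓ (⨆ m' : {m' : Ideal R // Q m'}, Socm m'.val) = ⊥ := by
    intro Q m hmmax hQm hQmax
    by_contra hne
    obtain ⟨u, hu, hune⟩ := Submodule.exists_mem_ne_zero_of_ne_bot hne
    obtain ⟨hum, husup⟩ := hu
    obtain ⟨s, hus⟩ := Submodule.exists_finset_of_mem_iSup _ husup
    have hkill : ∀ r ∈ s.inf (fun m' => m'.val), r • u = 0 := by
      have hle : (⨆ m' ∈ s, Socm m'.val) ≤
          Submodule.torsionBySet R W ((s.inf (fun m' => m'.val) : Ideal R) : Set R) := by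
        refine iSup_le fun m' => iSup_le fun hm' => ?_
        refine le_trans inf_le_right (Submodule.torsionBySet_le_torsionBySet_of_subset ?_)
        exact fun r hr => (Finset.inf_le hm' : _ ≤ m'.val) hr
      intro r hr
      exact (Submodule.mem_torsionBySet_iff _ _).mp (hle hus) ⟨r, hr⟩
    have hann_ne_top : (R ∙ u).annihilator ≠ ⊤ := by
      intro htop
      have : (1 : R) ∈ (R ∙ u).annihilator := htop ▸ Submodule.mem_top
      exact hune (by simpa using (Submodule.mem_annihilator_span_singleton _ _).mp this)
    have hann : m = (R ∙ u).annihilator := by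
      refine hmmax.eq_of_le hann_ne_top ?_
      intro r hr
      exact (Submodule.mem_annihilator_span_singleton _ _).mpr
        ((Submodule.mem_torsionBySet_iff _ _).mp hum.2 ⟨r, hr⟩)
    have hJle : s.inf (fun m' => m'.val) ≤ m := by
      rw [hann]
      intro r hr
      exact (Submodule.mem_annihilator_span_singleton _ _).mpr (hkill r hr)
    obtain ⟨m', hm's, hm'le⟩ := (Ideal.IsPrime.inf_le' hmmax.isPrime).mp hJle
    have : m'.val = m := (hQmax _ m'.2).eq_of_le hmmax.ne_top hm'le
    exact hQm (this ▸ m'.2)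
  -- (b2) A is finite
  have hAfin : A.Finite := by
    by_contra hAinf
    have hAinf' : A.Infinite := hAinf
    set e := hAinf'.natEmbedding with he
    set Q : ℕ → Ideal R → Prop :=
      fun n m' => m' ∈ A ∧ ∀ i : ℕ, i < n → ((e i : ↥A) : Ideal R) ≠ m' with hQ
    set D : ℕ → Submodule R W := fun n => ⨆ m' : {m' : Ideal R // Q n m'}, Socm m'.val with hD
    have hDY : ∀ n, D n ≤ Y := fun n => iSup_le fun m' => inf_le_left
    have hDmono : ∀ n, D (n + 1) ≤ D n := by
      intro n
      refine iSup_le fun m' => ?_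
      exact le_iSup_of_le ⟨m'.val, m'.2.1, fun i hi => m'.2.2 i (by omega)⟩ le_rfl
    have hDstrict : ∀ n, Socm ((e n : ↥A) : Ideal R) ≤ D n ∧
        Socm ((e n : ↥A) : Ideal R) ⊓ D (n + 1) = ⊥ := by
      intro n
      constructor
      · refine le_iSup_of_le ⟨((e n : ↥A) : Ideal R), (e n).2, fun i hi heq => ?_⟩ le_rfl
        have : e i = e n := Subtype.ext heq
        exact absurd (e.injective this) (by omega)
      · refine hindep (Q (n+1)) _ ((e n).2.1) ?_ (fun m' hm' => hm'.1.1)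
        intro hQn
        exact hQn.2 n (by omega) rfl
    -- descending chain in Y
    set g : ℕ →o (Submodule R ↥Y)ᵒᵈ :=
      ⟨fun n => OrderDual.toDual (Submodule.comap Y.subtype (D n)),
       fun n n' hnn => by
         simp only
         induction hnn with
         | refl => exact le_rfl
         | step _ ih => exact le_trans ih (Submodule.comap_mono (hDmono _))⟩ with hg
    obtain ⟨n, hn⟩ := IsArtinian.monotone_stabilizes g
    have hDn : D n = D (n + 1) := by
      have h1 : Submodule.comap Y.subtype (D n) = Submodule.comap Y.subtype (D (n+1)) :=
        congrArg OrderDual.ofDual (hn (n+1) (by omega))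
      have h2 : Submodule.map Y.subtype (Submodule.comap Y.subtype (D n)) = D n := by
        rw [Submodule.map_comap_subtype, inf_eq_right.2 (hDY n)]
      have h3 : Submodule.map Y.subtype (Submodule.comap Y.subtype (D (n+1))) = D (n+1) := by
        rw [Submodule.map_comap_subtype, inf_eq_right.2 (hDY (n+1))]
      rw [← h2, h1, h3]
    have hbot : Socm ((e n : ↥A) : Ideal R) = ⊥ := by
      have h1 := (hDstrict n).1
      rw [hDn] at h1
      rw [← (hDstrict n).2]
      exact le_antisymm (le_inf le_rfl h1) inf_le_left
    exact (e n).2.2 hbot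
  -- the socle T
  set At := hAfin.toFinset with hAt
  set T : Submodule R W := ⨆ m ∈ At, Socm m with hT
  have hTY : T ≤ Y := iSup_le fun m => iSup_le fun _ => inf_le_left
  have hTessY : ∀ N : Submodule R W, N ≤ Y → N ≠ ⊥ → N ⊓ T ≠ ⊥ := by
    intro N hNY hNbot hbot
    obtain ⟨m, hmA, u, hune, huN, huS⟩ := hb1 N hNY hNbot
    have hmem : u ∈ N ⊓ T :=
      ⟨huN, (le_iSup₂ (f := fun m _ => Socm m) m (hAfin.mem_toFinset.mpr hmA)) huS⟩
    rw [hbot] at hmem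
    exact hune ((Submodule.mem_bot R).mp hmem)
  have hTess : ∀ V : Submodule R W, V ≠ ⊥ → V ⊓ T ≠ ⊥ := by
    intro V hV hbot
    refine hTessY (V ⊓ Y) inf_le_right (hess V hV) ?_
    refine le_bot_iff.mp ?_
    rw [← hbot]
    exact le_inf (le_trans inf_le_left inf_le_left) inf_le_right
  -- the ideal b and generators
  set b : Ideal R := At.inf id with hb
  have hmemb : ∀ r : R, r ∈ b ↔ ∀ m ∈ At, r ∈ m := by
    intro r
    rw [hb]
    exact Submodule.mem_finsetInf
  have hbT : ∀ x ∈ b, ∀ t ∈ T, x • t = 0 := by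
    intro x hx t ht
    have hle : T ≤ Submodule.torsionBySet R W (b : Set R) := by
      refine iSup_le fun m => iSup_le fun hm => ?_
      refine le_trans inf_le_right (Submodule.torsionBySet_le_torsionBySet_of_subset ?_)
      exact fun r hr => (Finset.inf_le hm : b ≤ id m) hr
    exact (Submodule.mem_torsionBySet_iff _ _).mp (hle ht) ⟨x, hx⟩
  obtain ⟨S, hS⟩ := IsNoetherian.noetherian (M := R) b
  set l := S.toList with hl
  have hlb : ∀ x ∈ l, x ∈ b := by
    intro x hx
    rw [← hS]
    exact Submodule.subset_span (by simpa [hl] using hx)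
  have htorW : ∀ x ∈ l, ∀ w : W, ∃ n : ℕ, x ^ n • w = 0 := by
    intro x hx w
    exact lemmaE T hTess x (fun t ht => hbT x (hlb x hx) t ht) w
  -- the torsion submodule equals T
  have hUT : Submodule.torsionBySet R W {y : R | y ∈ l} = T := by
    refine le_antisymm ?_ ?_
    · intro u hu
      -- u is killed by b
      have hbu : ∀ r ∈ b, r • u = 0 := by
        have hble : b ≤ (R ∙ u).annihilator := by
          rw [← hS]
          refine Submodule.span_le.mpr ?_
          intro x hxS
          refine (Submodule.mem_annihilator_span_singleton _ _).mpr ?_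
          exact (Submodule.mem_torsionBySet_iff _ _).mp hu ⟨x, by simpa [hl] using hxS⟩
        exact fun r hr => (Submodule.mem_annihilator_span_singleton _ _).mp (hble hr)
      -- idempotent-like elements
      have hidem : ∀ m ∈ At, ∃ r : R, r - 1 ∈ m ∧ ∀ m' ∈ At, m' ≠ m → r ∈ m' := by
        intro m hm
        have hmmax : m.IsMaximal := (hAfin.mem_toFinset.mp hm).1
        have hsup : m ⊔ (⨅ m' ∈ At.erase m, m') = ⊤ := by
          refine Ideal.sup_iInf_eq_top ?_
          intro m' hm'
          exact Ideal.IsMaximal.coprime_of_ne hmmax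
            ((hAfin.mem_toFinset.mp (Finset.mem_of_mem_erase hm')).1)
            (Ne.symm (Finset.ne_of_mem_erase hm'))
        have h1 : (1 : R) ∈ m ⊔ (⨅ m' ∈ At.erase m, m') := hsup ▸ Submodule.mem_top
        obtain ⟨a, ha, r, hr, har⟩ := Submodule.mem_sup.mp h1
        refine ⟨r, ?_, ?_⟩
        · have : r - 1 = -a := by rw [← har]; ring
          rw [this]
          exact m.neg_mem ha
        · intro m' hm' hne
          have : r ∈ ⨅ m'' ∈ At.erase m, (m'' : Ideal R) := hr
          simp only [Submodule.mem_iInf] at this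
          exact this m' (Finset.mem_erase.mpr ⟨hne, hm'⟩)
      set E : Ideal R → R := fun m => if h : m ∈ At then (hidem m h).choose else 0 with hE
      have hE1 : ∀ m ∈ At, E m - 1 ∈ m := by
        intro m hm
        rw [hE]; simp only [dif_pos hm]
        exact (hidem m hm).choose_spec.1
      have hE2 : ∀ m ∈ At, ∀ m' ∈ At, m' ≠ m → E m ∈ m' := by
        intro m hm m' hm' hne
        rw [hE]; simp only [dif_pos hm]
        exact (hidem m hm).choose_spec.2 m' hm' hne
      -- 1 - ∑ E m ∈ b
      have hsum : (1 : R) - ∑ m ∈ At, E m ∈ b := by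
        rw [hmemb]
        intro m' hm'
        have heq : (1 : R) - ∑ m ∈ At, E m
            = -(E m' - 1) - ∑ m ∈ At.erase m', E m := by
          rw [← Finset.add_sum_erase At E hm']
          ring
        rw [heq]
        refine Submodule.sub_mem _ (m'.neg_mem (hE1 m' hm')) ?_
        refine Ideal.sum_mem _ ?_
        intro m hm
        exact hE2 m (Finset.mem_of_mem_erase hm) m' hm' (Ne.symm (Finset.ne_of_mem_erase hm))
      have husum : u = ∑ m ∈ At, E m • u := by
        have h0 : ((1 : R) - ∑ m ∈ At, E m) • u = 0 := hbu _ hsum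
        rw [sub_smul, one_smul, sub_eq_zero, Finset.sum_smul] at h0
        exact h0
      -- each term lies in T
      have hterm : ∀ m ∈ At, E m • u ∈ T := by
        intro m' hm'
        set um := E m' • u with hum
        have hm'max : (m' : Ideal R).IsMaximal := (hAfin.mem_toFinset.mp hm').1
        have hkill : ∀ r ∈ m', r • um = 0 := by
          intro r hr
          rw [hum, smul_smul]
          refine hbu _ ?_
          rw [hmemb]
          intro m'' hm''
          rcases eq_or_ne m'' m' with rfl | hne
          · exact Ideal.mul_mem_right _ _ hr
          · exact Ideal.mul_mem_left _ _ (hE2 m' hm' m'' hm'' hne)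
        by_cases hum0 : um = 0
        · rw [hum0]; exact T.zero_mem
        have hann_ne_top : (R ∙ um).annihilator ≠ ⊤ := by
          intro htop
          have : (1 : R) ∈ (R ∙ um).annihilator := htop ▸ Submodule.mem_top
          exact hum0 (by simpa using (Submodule.mem_annihilator_span_singleton _ _).mp this)
        have hann : (m' : Ideal R) = (R ∙ um).annihilator := by
          refine hm'max.eq_of_le hann_ne_top ?_
          intro r hr
          exact (Submodule.mem_annihilator_span_singleton _ _).mpr (hkill r hr)
        have hspum : Submodule.span R {um} ≠ ⊥ := by
          rw [Ne, Submodule.span_singleton_eq_bot]; exact hum0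
        obtain ⟨y, hy, hyne⟩ := Submodule.exists_mem_ne_zero_of_ne_bot (hTess _ hspum)
        obtain ⟨hyspan, hyT⟩ := hy
        obtain ⟨r, rfl⟩ := Submodule.mem_span_singleton.mp hyspan
        have hrm' : r ∉ (m' : Ideal R) := by
          intro hr
          exact hyne (hkill r hr)
        obtain ⟨sr, i, hi, hsri⟩ := Ideal.IsMaximal.exists_inv hm'max hrm'
        have hdec : um = sr • (r • um) + i • um := by
          have h1 : (sr * r + i) • um = um := by rw [hsri, one_smul]
          conv_lhs => rw [← h1]
          rw [add_smul, mul_smul]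
        rw [hdec, hkill i hi, add_zero]
        exact T.smul_mem sr hyT
      rw [husum]
      exact Submodule.sum_mem T hterm
    · intro t ht
      refine (Submodule.mem_torsionBySet_iff _ _).mpr ?_
      rintro ⟨a, ha⟩
      exact hbT a (hlb a ha) t ht
  have hUart : IsArtinian R ↥(Submodule.torsionBySet R W {y : R | y ∈ l}) := by
    rw [hUT]
    exact isArtinian_of_le hTY
  exact lemmaM l W inferInstance inferInstance htorW hUart

end Aux

section Swap
variable {R : Type u} [CommRing R]

/-- The key "swap" lemma: if `Y ≤ X` is Artinian with `X/Y ∈ S`, then `X` has a submodule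
in `S` with Artinian quotient. -/
lemma swap_lemma [IsNoetherianRing R]
    (S : ∀ (M : Type v) [AddCommGroup M] [Module R M], Prop)
    (hS : IsSerreClass R S)
    (X : Type v) [AddCommGroup X] [Module R X] (Y : Submodule R X)
    (hYart : IsArtinian R ↥Y) (hq : S (X ⧸ Y)) :
    ∃ C : Submodule R X, S ↥C ∧ IsArtinian R (X ⧸ C) := by
  -- Zorn: a maximal complement of Y
  obtain ⟨Z, hZY, hZmax⟩ : ∃ Z : Submodule R X, Z ⊓ Y = ⊥ ∧
      ∀ Z' : Submodule R X, Z' ⊓ Y = ⊥ → Z ≤ Z' → Z' = Z := by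
    have hzorn := zorn_le₀ {Z : Submodule R X | Z ⊓ Y = ⊥} ?_
    · obtain ⟨Z, hZ⟩ := hzorn
      exact ⟨Z, hZ.1, fun Z' h1 h2 => le_antisymm (hZ.2 h1 h2) h2⟩
    · intro c hsub hchain
      rcases c.eq_empty_or_nonempty with rfl | ⟨Z₁, hZ₁⟩
      · exact ⟨⊥, by simp, fun z hz => absurd hz (Set.notMem_empty z)⟩
      · refine ⟨sSup c, ?_, fun z hz => le_sSup hz⟩
        show sSup c ⊓ Y = ⊥
        rw [eq_bot_iff]
        rintro v ⟨hvs, hvY⟩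
        obtain ⟨Z', hZ'c, hvZ'⟩ :=
          (Submodule.mem_sSup_of_directed ⟨Z₁, hZ₁⟩ hchain.directedOn).mp hvs
        have hZ'Y : Z' ⊓ Y = ⊥ := hsub hZ'c
        rw [← hZ'Y]
        exact ⟨hvZ', hvY⟩
  -- S Z
  have hZS : S ↥Z := by
    set φ : ↥Z →ₗ[R] X ⧸ Y := (Y.mkQ).comp Z.subtype with hφ
    have hinj : Function.Injective φ := by
      rw [← LinearMap.ker_eq_bot]
      rw [eq_bot_iff]
      rintro ⟨z, hz⟩ hker
      have : z ∈ Y := (Submodule.Quotient.mk_eq_zero Y).mp hker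
      have : z ∈ Z ⊓ Y := ⟨hz, this⟩
      rw [hZY] at this
      exact Subtype.ext ((Submodule.mem_bot R).mp this)
    have h1 : S ↥(LinearMap.range φ) := hS.subClosed (X ⧸ Y) (LinearMap.range φ) hq
    exact hS.isoClosed _ _ (LinearEquiv.ofInjective φ hinj).symm h1
  -- X/Z is an essential extension of the image of Y
  set Ybar : Submodule R (X ⧸ Z) := Y.map Z.mkQ with hYbar
  have hYbarArt : IsArtinian R ↥Ybar := by
    haveI := hYart
    set ψ : ↥Y →ₗ[R] X ⧸ Z := (Z.mkQ).comp Y.subtype with hψ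
    have : LinearMap.range ψ = Ybar := by
      rw [hψ, LinearMap.range_comp, Submodule.range_subtype]
    haveI hr : IsArtinian R ↥(LinearMap.range ψ) := isArtinian_range ψ
    rw [this] at hr
    exact hr
  have hessent : ∀ V : Submodule R (X ⧸ Z), V ≠ ⊥ → V ⊓ Ybar ≠ ⊥ := by
    intro V hV hbot
    set V' := Submodule.comap Z.mkQ V with hV'
    have hZV' : Z ≤ V' := by
      intro z hz
      show Z.mkQ z ∈ V
      rw [show Z.mkQ z = 0 from (Submodule.Quotient.mk_eq_zero Z).mpr hz]
      exact V.zero_mem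
    have hne : V' ≠ Z := by
      intro heq
      refine hV ?_
      have hmc : Submodule.map Z.mkQ V' = V :=
        Submodule.map_comap_eq_of_surjective (Submodule.Quotient.mk_surjective Z) V
      rw [← hmc, heq, eq_bot_iff]
      rintro w ⟨z, hz, rfl⟩
      simp [(Submodule.Quotient.mk_eq_zero Z).mpr hz]
    have hVY : V' ⊓ Y ≠ ⊥ := fun h0 => hne (hZmax V' h0 hZV')
    obtain ⟨y, hy, hyne⟩ := Submodule.exists_mem_ne_zero_of_ne_bot hVY
    have h1 : Z.mkQ y ∈ V ⊓ Ybar := ⟨hy.1, ⟨y, hy.2, rfl⟩⟩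
    have h2 : Z.mkQ y ≠ 0 := by
      intro h0
      have hyZ : y ∈ Z := (Submodule.Quotient.mk_eq_zero Z).mp h0
      have : y ∈ Z ⊓ Y := ⟨hyZ, hy.2⟩
      rw [hZY] at this
      exact hyne ((Submodule.mem_bot R).mp this)
    rw [hbot] at h1
    exact h2 ((Submodule.mem_bot R).mp h1)
  have hWart : IsArtinian R (X ⧸ Z) := artinian_of_essential_artinian Ybar hYbarArt hessent
  exact ⟨Z, hZS, hWart⟩

end Swap

/-- For any Serre class `S`, the extension class `(S, S_Artin)` — the class of modules `M`
admitting a submodule `N ∈ S` with `M/N` Artinian — is a Serre class. -/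
theorem extensionClass_artinian_isSerreClass
    {R : Type u} [CommRing R] [IsNoetherianRing R]
    (S : ∀ (M : Type v) [AddCommGroup M] [Module R M], Prop)
    (hS : IsSerreClass R S) :
    IsSerreClass R
      (ExtensionClass S (fun (M : Type v) [AddCommGroup M] [Module R M] => IsArtinian R M)) := by
  constructor
  -- isoClosed
  · intro M N _ _ _ _ e hM
    obtain ⟨P, hPS, hPart⟩ := hM
    refine ⟨P.map (e : M →ₗ[R] N), ?_, ?_⟩
    · exact hS.isoClosed _ _ (e.submoduleMap P) hPS
    · exact isArtinian_of_linearEquiv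
        (Submodule.Quotient.equiv P (P.map (e : M →ₗ[R] N)) e rfl)
  -- zeroMem
  · intro M _ _ hsub
    refine ⟨⊥, hS.zeroMem _ inferInstance, ?_⟩
    haveI := hsub
    haveI : Subsingleton (M ⧸ (⊥ : Submodule R M)) := by
      constructor
      intro a b
      obtain ⟨a', rfl⟩ := Submodule.Quotient.mk_surjective _ a
      obtain ⟨b', rfl⟩ := Submodule.Quotient.mk_surjective _ b
      rw [Subsingleton.elim a' b']
    infer_instance
  -- subClosed
  · intro M _ _ N hM
    obtain ⟨P, hPS, hPart⟩ := hM
    refine ⟨Submodule.comap N.subtype P, ?_, ?_⟩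
    · have h1 : S ↥(Submodule.comap P.subtype (N ⊓ P)) :=
        hS.subClosed ↥P (Submodule.comap P.subtype (N ⊓ P)) hPS
      have e1 : ↥(Submodule.comap P.subtype (N ⊓ P)) ≃ₗ[R] ↥(N ⊓ P) :=
        Submodule.comapSubtypeEquivOfLe inf_le_right
      have e2 : ↥(Submodule.comap N.subtype P)
          ≃ₗ[R] ↥((Submodule.comap N.subtype P).map N.subtype) :=
        Submodule.equivMapOfInjective N.subtype N.injective_subtype _
      have heq : (Submodule.comap N.subtype P).map N.subtype = N ⊓ P :=
        Submodule.map_comap_subtype N P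
      exact hS.isoClosed _ _ (e1.trans (e2.trans (LinearEquiv.ofEq _ _ heq)).symm) h1
    · haveI := hPart
      set φ : ↥N →ₗ[R] M ⧸ P := (P.mkQ).comp N.subtype with hφ
      have hker : LinearMap.ker φ = Submodule.comap N.subtype P := by
        rw [hφ, LinearMap.ker_comp, Submodule.ker_mkQ]
      refine isArtinian_of_injective
        ((Submodule.comap N.subtype P).liftQ φ (le_of_eq hker.symm)) ?_
      exact LinearMap.ker_eq_bot.mp (Submodule.ker_liftQ_eq_bot _ _ _ (le_of_eq hker))
  -- quotClosed
  · intro M _ _ Q hM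
    obtain ⟨P, hPS, hPart⟩ := hM
    refine ⟨P.map Q.mkQ, ?_, ?_⟩
    · set ψ : ↥P →ₗ[R] M ⧸ Q := (Q.mkQ).comp P.subtype with hψ
      have hrangeψ : LinearMap.range ψ = P.map Q.mkQ := by
        rw [hψ, LinearMap.range_comp, Submodule.range_subtype]
      have h1 : S (↥P ⧸ LinearMap.ker ψ) := hS.quotClosed ↥P (LinearMap.ker ψ) hPS
      exact hS.isoClosed _ _
        ((LinearMap.quotKerEquivRange ψ).trans (LinearEquiv.ofEq _ _ hrangeψ)) h1
    · haveI := hPart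
      have hle : P ≤ LinearMap.ker (((P.map Q.mkQ).mkQ).comp Q.mkQ) := by
        intro p hp
        rw [LinearMap.mem_ker, LinearMap.comp_apply]
        exact (Submodule.Quotient.mk_eq_zero _).mpr (Submodule.mem_map_of_mem hp)
      refine isArtinian_of_surjective (M ⧸ P)
        (P.liftQ (((P.map Q.mkQ).mkQ).comp Q.mkQ) hle) ?_
      intro w
      obtain ⟨w', rfl⟩ := Submodule.Quotient.mk_surjective _ w
      obtain ⟨m, rfl⟩ := Submodule.Quotient.mk_surjective _ w'
      exact ⟨P.mkQ m, rfl⟩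
  -- extClosed
  · intro L M N _ _ _ _ _ _ f g hf hg hrange hL hN
    obtain ⟨A, hAS, hAart⟩ := hL
    obtain ⟨B, hBS, hBart⟩ := hN
    set M₁ : Submodule R M := Submodule.comap g B with hM₁
    have hrangef_le : LinearMap.range f ≤ M₁ := by
      rw [hrange]
      intro m hm
      show g m ∈ B
      rw [LinearMap.mem_ker.mp hm]
      exact B.zero_mem
    set F : Submodule R M := A.map f with hF
    have hFle : F ≤ LinearMap.range f := LinearMap.map_le_range
    have hFM₁ : F ≤ M₁ := le_trans hFle hrangef_le
    set F' : Submodule R ↥M₁ := Submodule.comap M₁.subtype F with hF'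
    set Rf' : Submodule R ↥M₁ := Submodule.comap M₁.subtype (LinearMap.range f) with hRf'
    have hF'Rf' : F' ≤ Rf' := Submodule.comap_mono hFle
    set YX : Submodule R (↥M₁ ⧸ F') := Rf'.map F'.mkQ with hYX
    set f₁ : L →ₗ[R] ↥M₁ := f.codRestrict M₁ (fun l => hrangef_le ⟨l, rfl⟩) with hf₁
    have hrf₁ : LinearMap.range f₁ = Rf' := by
      ext x
      constructor
      · rintro ⟨l, rfl⟩
        show (f₁ l : M) ∈ LinearMap.range f
        exact ⟨l, rfl⟩
      · intro hx
        obtain ⟨l, hl⟩ := hx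
        exact ⟨l, Subtype.ext hl⟩
    have hYXart : IsArtinian R ↥YX := by
      haveI := hAart
      set φ : L →ₗ[R] (↥M₁ ⧸ F') := (F'.mkQ).comp f₁ with hφ
      have hAker : A ≤ LinearMap.ker φ := by
        intro a ha
        rw [LinearMap.mem_ker, hφ, LinearMap.comp_apply]
        refine (Submodule.Quotient.mk_eq_zero F').mpr ?_
        show (f₁ a : M) ∈ F
        exact Submodule.mem_map_of_mem ha
      set φbar := A.liftQ φ hAker with hφbar
      have hrangeφ : LinearMap.range φbar = YX := by
        rw [hφbar, Submodule.range_liftQ, hφ, LinearMap.range_comp, hrf₁]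
      haveI h5 : IsArtinian R ↥(LinearMap.range φbar) := isArtinian_range φbar
      rw [hrangeφ] at h5
      exact h5
    have hquotS : S ((↥M₁ ⧸ F') ⧸ YX) := by
      have e1 : ((↥M₁ ⧸ F') ⧸ YX) ≃ₗ[R] (↥M₁ ⧸ Rf') :=
        Submodule.quotientQuotientEquivQuotient F' Rf' hF'Rf'
      set g₁ : ↥M₁ →ₗ[R] ↥B := g.restrict (fun m hm => hm) with hg₁
      have hg₁surj : Function.Surjective g₁ := by
        rintro ⟨b, hb⟩
        obtain ⟨m, rfl⟩ := hg b
        exact ⟨⟨m, hb⟩, rfl⟩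
      have hkerg₁ : LinearMap.ker g₁ = Rf' := by
        ext ⟨m, hm⟩
        constructor
        · intro hker
          show m ∈ LinearMap.range f
          rw [hrange, LinearMap.mem_ker]
          exact congrArg Subtype.val hker
        · intro hmem
          have : m ∈ LinearMap.ker g := by
            rw [← hrange]
            exact hmem
          exact Subtype.ext (LinearMap.mem_ker.mp this)
      have e2 : (↥M₁ ⧸ Rf') ≃ₗ[R] ↥B :=
        (Submodule.quotEquivOfEq _ _ hkerg₁.symm).trans
          (g₁.quotKerEquivOfSurjective hg₁surj)
      exact hS.isoClosed ↥B _ (e2.symm.trans e1.symm) hBS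
    obtain ⟨C', hC'S, hC'art⟩ := swap_lemma S hS (↥M₁ ⧸ F') YX hYXart hquotS
    set C₂ : Submodule R ↥M₁ := Submodule.comap F'.mkQ C' with hC₂
    have hF'C₂ : F' ≤ C₂ := by
      intro x hx
      show F'.mkQ x ∈ C'
      rw [show F'.mkQ x = 0 from (Submodule.Quotient.mk_eq_zero F').mpr hx]
      exact C'.zero_mem
    set C : Submodule R M := C₂.map M₁.subtype with hC
    have hCS : S ↥C := by
      have hAF : S ↥F' := by
        have e1 : ↥A ≃ₗ[R] ↥F := Submodule.equivMapOfInjective f hf A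
        have e2 : ↥F' ≃ₗ[R] ↥F := Submodule.comapSubtypeEquivOfLe hFM₁
        exact hS.isoClosed _ _ (e1.trans e2.symm) hAS
      set i : ↥F' →ₗ[R] ↥C₂ := Submodule.inclusion hF'C₂ with hi
      set π : ↥C₂ →ₗ[R] ↥C' := (F'.mkQ).restrict (fun x hx => hx) with hπ
      have hiinj : Function.Injective i := Submodule.inclusion_injective hF'C₂
      have hπsurj : Function.Surjective π := by
        rintro ⟨c', hc'⟩
        obtain ⟨m, rfl⟩ := Submodule.Quotient.mk_surjective F' c'
        exact ⟨⟨m, hc'⟩, rfl⟩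
      have hrk : LinearMap.range i = LinearMap.ker π := by
        ext ⟨x, hx⟩
        constructor
        · rintro ⟨⟨y, hy⟩, hyx⟩
          have hyx' : y = x := congrArg Subtype.val hyx
          subst hyx'
          have : F'.mkQ y = 0 := (Submodule.Quotient.mk_eq_zero F').mpr hy
          rw [LinearMap.mem_ker]
          exact Subtype.ext this
        · intro hker
          have h0 : F'.mkQ x = 0 := congrArg Subtype.val hker
          have hxF' : x ∈ F' := (Submodule.Quotient.mk_eq_zero F').mp h0
          exact ⟨⟨x, hxF'⟩, rfl⟩
      have hC₂S : S ↥C₂ := hS.extClosed ↥F' ↥C₂ ↥C' i π hiinj hπsurj hrk hAF hC'S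
      exact hS.isoClosed _ _
        (Submodule.equivMapOfInjective M₁.subtype M₁.injective_subtype C₂) hC₂S
    have hCart : IsArtinian R (M ⧸ C) := by
      have hCM₁ : C ≤ M₁ := Submodule.map_subtype_le M₁ C₂
      set β : (M ⧸ C) →ₗ[R] (M ⧸ M₁) :=
        C.liftQ M₁.mkQ (by rw [Submodule.ker_mkQ]; exact hCM₁) with hβ
      haveI hMM₁ : IsArtinian R (M ⧸ M₁) := by
        haveI := hBart
        set ψ : M →ₗ[R] N ⧸ B := (B.mkQ).comp g with hψ
        have hψsurj : Function.Surjective ψ :=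
          (Submodule.Quotient.mk_surjective B).comp hg
        have hkerψ : LinearMap.ker ψ = M₁ := by
          rw [hψ, LinearMap.ker_comp, Submodule.ker_mkQ]
        have e : (M ⧸ M₁) ≃ₗ[R] (N ⧸ B) :=
          (Submodule.quotEquivOfEq _ _ hkerψ.symm).trans
            (ψ.quotKerEquivOfSurjective hψsurj)
        exact isArtinian_of_linearEquiv e.symm
      have hkerβ : LinearMap.ker β = M₁.map C.mkQ := by
        rw [hβ, Submodule.ker_liftQ, Submodule.ker_mkQ]
      haveI hkerart : IsArtinian R ↥(LinearMap.ker β) := by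
        have hmapC₂ : C₂.map F'.mkQ = C' :=
          Submodule.map_comap_eq_of_surjective (Submodule.Quotient.mk_surjective F') C'
        haveI hsrc : IsArtinian R ((↥M₁ ⧸ F') ⧸ C₂.map F'.mkQ) := by
          rw [hmapC₂]
          exact hC'art
        haveI hM₁C₂ : IsArtinian R (↥M₁ ⧸ C₂) :=
          isArtinian_of_linearEquiv (Submodule.quotientQuotientEquivQuotient F' C₂ hF'C₂)
        set q₁ : ↥M₁ →ₗ[R] (M ⧸ C) := (C.mkQ).comp M₁.subtype with hq₁
        have hC₂ker : C₂ ≤ LinearMap.ker q₁ := by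
          intro m hm
          rw [LinearMap.mem_ker, hq₁, LinearMap.comp_apply]
          exact (Submodule.Quotient.mk_eq_zero C).mpr (Submodule.mem_map_of_mem hm)
        set q₂ := C₂.liftQ q₁ hC₂ker with hq₂
        have hrangeq₂ : LinearMap.range q₂ = LinearMap.ker β := by
          rw [hq₂, Submodule.range_liftQ, hkerβ, hq₁, LinearMap.range_comp,
            Submodule.range_subtype]
        haveI h6 : IsArtinian R ↥(LinearMap.range q₂) := isArtinian_range q₂
        rw [hrangeq₂] at h6
        exact h6
      exact isArtinian_of_range_eq_ker (LinearMap.ker β).subtype β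
        (by rw [Submodule.range_subtype])
    exact ⟨C, hCS, hCart⟩
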